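/- For a one-dimensional simplicial complex which is a Barycentric refinement of a graph, the connection matrix L satisfies (L - L^{-1})^2 + 2 = L^2 + L^{-2}, and the matrix L - L^{-1} has only nonnegative eigenvalues. -/

import Mathlib

open Matrix Finset

private lemma pair_eq_aux {α : Type*} {a b te he tf hf : α} (hab : a ≠ b)
    (hte : te ≠ he) (htf : tf ≠ hf)
    (h1 : a = te ∨ a = he) (h2 : a = tf ∨ a = hf)
    (h3 : b = te ∨ b = he) (h4 : b = tf ∨ b = hf) :
    (te = tf ∧ he = hf) ∨ (te = hf ∧ he = tf) := by
  rcases h1 with h1 | h1 <;> rcases h3 with h3 | h3 <;> rcases h2 with h2 | h2 <;>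
    rcases h4 with h4 | h4 <;> grind


/-- For the connection matrix `L` of a one-dimensional simplicial complex which
is a Barycentric refinement of a graph, `(L - L⁻¹)² + 2·1 = L² + L⁻²`, and the
matrix `L - L⁻¹` has only nonnegative eigenvalues (it is positive
semidefinite). -/
theorem hydrogen_identity {V : Type*} [Fintype V] [DecidableEq V]
    (K : Finset (Finset V))
    (hK1 : ∀ x ∈ K, x.card = 1 ∨ x.card = 2)
    (hKc : ∀ x ∈ K, ∀ y ⊆ x, y.Nonempty → y ∈ K)
    (Γ : SimpleGraph {x // x ∈ K}) [DecidableRel Γ.Adj]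
    (hΓ : ∀ x y, Γ.Adj x y ↔ ((x : Finset V) ⊂ (y : Finset V) ∨ (y : Finset V) ⊂ (x : Finset V)))
    (E : Type*) [Fintype E] [DecidableEq E]
    (t h : E → {x // x ∈ K})
    (hth : ∀ e, Γ.Adj (t e) (h e))
    (hbij : ∀ u v, Γ.Adj u v → ∃! e, s(t e, h e) = s(u, v))
    (ends : ({x // x ∈ K} ⊕ E) → Finset {x // x ∈ K})
    (hends : ∀ z, ends z = Sum.elim (fun x => ({x} : Finset {x // x ∈ K}))
      (fun e => {t e, h e}) z)
    (L : Matrix ({x // x ∈ K} ⊕ E) ({x // x ∈ K} ⊕ E) ℝ)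
    (hL : ∀ z w, L z w = if (ends z ∩ ends w).Nonempty then 1 else 0) :
    (L - L⁻¹) ^ 2 + 2 • (1 : Matrix ({x // x ∈ K} ⊕ E) ({x // x ∈ K} ⊕ E) ℝ) =
      L ^ 2 + (L⁻¹) ^ 2 ∧
    (L - L⁻¹).PosSemidef := by
  classical
  -- the incidence matrix
  set B : Matrix {x // x ∈ K} E ℝ := fun v e => if v = t e ∨ v = h e then 1 else 0 with hB
  have hne : ∀ e, t e ≠ h e := fun e => (hth e).ne
  -- uniqueness of edges with given endpoints
  have huniq : ∀ e f, (t e = t f ∧ h e = h f) ∨ (t e = h f ∧ h e = t f) → e = f := by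
    intro e f hef
    obtain ⟨g, hg, hgu⟩ := hbij (t e) (h e) (hth e)
    have h1 : e = g := hgu e rfl
    have h2 : f = g := by
      refine hgu f (Sym2.eq_iff.2 ?_)
      rcases hef with ⟨h1, h2⟩ | ⟨h1, h2⟩
      · exact Or.inl ⟨h1.symm, h2.symm⟩
      · exact Or.inr ⟨h2.symm, h1.symm⟩
    rw [h1, h2]
  -- block decomposition of L
  have hLblock : L = fromBlocks 1 B Bᵀ (Bᵀ * B - 1) := by
    ext i j
    rcases i with x | e <;> rcases j with y | f
    · simp only [hL, hends, Sum.elim_inl, fromBlocks_apply₁₁, Matrix.one_apply]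
      rcases eq_or_ne x y with rfl | hxy
      · simp
      · simp [Finset.singleton_inter_of_notMem, hxy]
    · simp only [hL, hends, Sum.elim_inl, Sum.elim_inr, fromBlocks_apply₁₂]; simp only [hB]
      by_cases hx : x = t f ∨ x = h f
      · rw [if_pos, if_pos hx]
        exact ⟨x, by simp [hx]⟩
      · rw [if_neg, if_neg hx]
        rintro ⟨v, hv⟩
        simp only [Finset.mem_inter, Finset.mem_singleton, Finset.mem_insert] at hv
        exact hx (hv.1 ▸ hv.2)
    · simp only [hL, hends, Sum.elim_inl, Sum.elim_inr, fromBlocks_apply₂₁, transpose_apply]; simp only [hB]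
      by_cases hx : y = t e ∨ y = h e
      · rw [if_pos, if_pos hx]
        exact ⟨y, by simp [hx]⟩
      · rw [if_neg, if_neg hx]
        rintro ⟨v, hv⟩
        simp only [Finset.mem_inter, Finset.mem_singleton, Finset.mem_insert] at hv
        exact hx (hv.2 ▸ hv.1)
    · simp only [hL, hends, Sum.elim_inr, fromBlocks_apply₂₂, Matrix.sub_apply,
        Matrix.mul_apply, transpose_apply, Matrix.one_apply]
      have hsum : ∑ v, B v e * B v f
          = ((({t e, h e} : Finset {x // x ∈ K}) ∩ {t f, h f}).card : ℝ) := by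
        rw [show (∑ v, B v e * B v f)
            = ∑ v, if v ∈ (({t e, h e} : Finset {x // x ∈ K}) ∩ {t f, h f}) then (1:ℝ) else 0 by
          refine Finset.sum_congr rfl fun v _ => ?_
          simp only [hB, Finset.mem_inter, Finset.mem_insert, Finset.mem_singleton]
          by_cases h1 : v = t e ∨ v = h e <;> by_cases h2 : v = t f ∨ v = h f <;>
            simp [h1, h2]]
        rw [Finset.sum_boole]
        congr 1
        rw [Finset.filter_mem_eq_inter, Finset.univ_inter]
      rw [hsum]
      rcases eq_or_ne e f with rfl | hef
      · simp only [if_pos rfl, Finset.inter_self]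
        rw [Finset.card_insert_of_notMem (by simp [hne e]), Finset.card_singleton]
        norm_num
      · rw [if_neg hef, sub_zero]
        by_cases hn : ((({t e, h e} : Finset {x // x ∈ K}) ∩ {t f, h f})).Nonempty
        · rw [if_pos hn]
          have hcard : ((({t e, h e} : Finset {x // x ∈ K}) ∩ {t f, h f})).card = 1 := by
            refine le_antisymm ?_ (Finset.one_le_card.2 hn)
            rw [Finset.card_le_one]
            intro a ha b hb
            by_contra hab
            simp only [Finset.mem_inter, Finset.mem_insert, Finset.mem_singleton] at ha hb
            apply hef
            exact huniq e f (pair_eq_aux hab (hne e) (hne f) ha.1 ha.2 hb.1 hb.2)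
          rw [hcard]; norm_num
        · rw [if_neg hn, Finset.not_nonempty_iff_eq_empty.1 hn]
          simp
  -- candidate inverse
  set N : Matrix ({x // x ∈ K} ⊕ E) ({x // x ∈ K} ⊕ E) ℝ :=
    fromBlocks (1 - B * Bᵀ) B Bᵀ (-1) with hN
  have h11 : (1 : Matrix {x // x ∈ K} {x // x ∈ K} ℝ) * (1 - B * Bᵀ) + B * Bᵀ = 1 := by
    rw [Matrix.one_mul, sub_add_cancel]
  have h12 : (1 : Matrix {x // x ∈ K} {x // x ∈ K} ℝ) * B
      + B * (-1 : Matrix E E ℝ) = 0 := by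
    rw [Matrix.one_mul, Matrix.mul_neg, Matrix.mul_one, add_neg_cancel]
  have h21 : Bᵀ * (1 - B * Bᵀ) + (Bᵀ * B - 1) * Bᵀ = 0 := by
    rw [Matrix.mul_sub, Matrix.sub_mul, Matrix.mul_one, Matrix.one_mul, Matrix.mul_assoc]
    abel
  have h22 : Bᵀ * B + (Bᵀ * B - 1) * (-1 : Matrix E E ℝ) = 1 := by
    rw [Matrix.mul_neg, Matrix.mul_one, neg_sub, add_sub_cancel]
  have hLN : L * N = 1 := by
    rw [hLblock, hN, fromBlocks_multiply, h11, h12, h21, h22, fromBlocks_one]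
  have hNL : N * L = 1 := mul_eq_one_comm.1 hLN
  have hinv : L⁻¹ = N := Matrix.inv_eq_right_inv hLN
  constructor
  · rw [hinv]
    have key : (L - N) * (L - N) = L * L - 1 - (1 - N * N) := by
      rw [sub_mul, mul_sub, mul_sub, hLN, hNL]
    rw [sq, sq, sq, key]
    abel
  · rw [hinv]
    set D : Matrix ({x // x ∈ K} ⊕ E) ({x // x ∈ K} ⊕ E) ℝ := fromBlocks 0 B Bᵀ 0 with hD
    have hDD : L - N = Dᴴ * D := by
      have hDH : Dᴴ = D := by
        ext i j
        rcases i with x | e <;> rcases j with y | f <;>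
          simp [hD, Matrix.conjTranspose_apply, fromBlocks]
      rw [hDH, hD, fromBlocks_multiply, hLblock, hN]
      ext i j
      rcases i with x | e <;> rcases j with y | f <;>
        simp [fromBlocks, Matrix.sub_apply, Matrix.mul_sub, Matrix.sub_mul] <;>
        ring_nf <;> simp [Matrix.sub_apply, Matrix.one_apply]
    rw [hDD]
    exact Matrix.posSemidef_conjTranspose_mul_self D
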